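/- Let 𝔥₁ and 𝔥₂ be finite-dimensional real Leibniz algebras and let α : 𝔥₁ → 𝔥₂ be a homomorphism of Leibniz algebras (a linear map with α([X,Y]) = [α(X),α(Y)] for all X,Y ∈ 𝔥₁). Then α is a morphism for the exponential rack structures: for all X, Y ∈ 𝔥₁, α(exp(ad_X)(Y)) = exp(ad_{α(X)})(α(Y)), i.e. α(X ▷ Y) = α(X) ▷ α(Y) where X ▷ Y := exp(ad_X)(Y). -/

import Mathlib

open NormedSpace

/-- A homomorphism `α : 𝔥₁ → 𝔥₂` of finite-dimensional real Leibniz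
algebras is a morphism for the exponential rack structures:
`α(exp(ad_X)(Y)) = exp(ad_{α X})(α Y)` for all `X, Y ∈ 𝔥₁`. -/
theorem leibniz_hom_is_rack_morphism
    {V W : Type*}
    [NormedAddCommGroup V] [NormedSpace ℝ V] [FiniteDimensional ℝ V]
    [NormedAddCommGroup W] [NormedSpace ℝ W] [FiniteDimensional ℝ W]
    (b₁ : V →L[ℝ] V →L[ℝ] V)
    (hLeib₁ : ∀ X Y Z : V, b₁ X (b₁ Y Z) = b₁ (b₁ X Y) Z + b₁ Y (b₁ X Z))
    (b₂ : W →L[ℝ] W →L[ℝ] W)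
    (hLeib₂ : ∀ X Y Z : W, b₂ X (b₂ Y Z) = b₂ (b₂ X Y) Z + b₂ Y (b₂ X Z))
    (α : V →ₗ[ℝ] W)
    (hα : ∀ X Y : V, α (b₁ X Y) = b₂ (α X) (α Y)) :
    ∀ X Y : V, α (exp (b₁ X) Y) = exp (b₂ (α X)) (α Y) := by
  intro X Y
  set A := b₁ X
  set B := b₂ (α X)
  let αc := LinearMap.toContinuousLinearMap α
  have hαc : ∀ v : V, αc v = α v := fun v => rfl
  -- key: α (Aⁿ Y) = Bⁿ (α Y)
  have hpow : ∀ (n : ℕ) (Y : V), α ((A ^ n) Y) = (B ^ n) (α Y) := by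
    intro n
    induction n with
    | zero => intro Y; simp
    | succ n ih =>
      intro Y
      have : (A ^ (n + 1)) Y = (A ^ n) (A Y) := by
        rw [pow_succ]; rfl
      rw [this, ih, hα]
      have : (B ^ (n + 1)) (α Y) = (B ^ n) (B (α Y)) := by
        rw [pow_succ]; rfl
      rw [this]
  have hsumA : Summable fun n : ℕ => ((n.factorial : ℝ)⁻¹) • A ^ n :=
    expSeries_summable' (𝕂 := ℝ) A
  have hsumB : Summable fun n : ℕ => ((n.factorial : ℝ)⁻¹) • B ^ n :=
    expSeries_summable' (𝕂 := ℝ) B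
  -- the continuous linear map sending T ↦ α (T Y)
  let f : (V →L[ℝ] V) →L[ℝ] W := αc.comp (ContinuousLinearMap.apply ℝ V Y)
  let g : (W →L[ℝ] W) →L[ℝ] W := ContinuousLinearMap.apply ℝ W (α Y)
  have h1 : α (exp A Y) = f (exp A) := rfl
  have h2 : exp B (α Y) = g (exp B) := rfl
  rw [h1, h2, exp_eq_tsum (𝕂 := ℝ), exp_eq_tsum (𝕂 := ℝ), f.map_tsum hsumA, g.map_tsum hsumB]
  congr 1
  funext n
  show α (((n.factorial : ℝ)⁻¹ • A ^ n) Y) = ((n.factorial : ℝ)⁻¹ • B ^ n) (α Y)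
  simp only [ContinuousLinearMap.smul_apply, map_smul, hpow n Y]
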